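/- Let J ∈ ℝ and let h : ℝ → ℝ be a 2π-periodic function of class C³ with h(θ) > 0 for all θ, satisfying h(θ)²/2 + h(θ)³·(h'(θ) + h'''(θ)) = J for all θ ∈ ℝ. Then J · ∫₀^{2π} h(θ)⁻² dθ = π. -/

import Mathlib

open Real

/-- If h is a positive 2π-periodic C³ solution of h²/2 + h³(h' + h''') = J,
    then J · ∫₀^{2π} h⁻² dθ = π. -/
theorem stmt_1 (J : ℝ) (h : ℝ → ℝ) (hper : Function.Periodic h (2 * π))
    (hC3 : ContDiff ℝ 3 h) (hpos : ∀ θ, 0 < h θ)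
    (heq : ∀ θ, (h θ) ^ 2 / 2 + (h θ) ^ 3 * (deriv h θ + iteratedDeriv 3 h θ) = J) :
    J * ∫ θ in (0:ℝ)..(2 * π), ((h θ) ^ 2)⁻¹ = π := by
  have hd : Differentiable ℝ h := hC3.differentiable (by norm_num)
  have h2' : ContDiff ℝ 2 (deriv h) :=
    ((contDiff_succ_iff_deriv (n := 2)).mp (by exact_mod_cast hC3)).2.2
  have hd1 : Differentiable ℝ (deriv h) := h2'.differentiable (by norm_num)
  have h1' : ContDiff ℝ 1 (deriv (deriv h)) :=
    ((contDiff_succ_iff_deriv (n := 1)).mp (by exact_mod_cast h2')).2.2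
  have hd2 : Differentiable ℝ (deriv (deriv h)) := h1'.differentiable one_ne_zero
  have hcont3 : Continuous (deriv (deriv (deriv h))) :=
    (((contDiff_succ_iff_deriv (n := 0)).mp (by exact_mod_cast h1')).2.2).continuous
  have hit : ∀ θ, iteratedDeriv 3 h θ = deriv (deriv (deriv h)) θ := by
    intro θ; simp [iteratedDeriv_succ, iteratedDeriv_zero]
  set F : ℝ → ℝ := fun θ => (h θ) ^ 2 / 2 + h θ * deriv (deriv h) θ - (deriv h θ) ^ 2 / 2
    with hF
  have hFd : ∀ θ, HasDerivAt F (h θ * (deriv h θ + deriv (deriv (deriv h)) θ)) θ := by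
    intro θ
    have H0 : HasDerivAt h (deriv h θ) θ := (hd θ).hasDerivAt
    have H1 : HasDerivAt (deriv h) (deriv (deriv h) θ) θ := (hd1 θ).hasDerivAt
    have H2 : HasDerivAt (deriv (deriv h)) (deriv (deriv (deriv h)) θ) θ := (hd2 θ).hasDerivAt
    have : HasDerivAt F _ θ := (((H0.pow 2).div_const 2).add (H0.mul H2)).sub ((H1.pow 2).div_const 2)
    convert this using 1
    ring
  -- pointwise identity
  have key : ∀ θ, J * ((h θ) ^ 2)⁻¹
      = 1 / 2 + h θ * (deriv h θ + deriv (deriv (deriv h)) θ) := by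
    intro θ
    have h0 := heq θ
    rw [hit θ] at h0
    have hne : (h θ) ^ 2 ≠ 0 := pow_ne_zero _ (hpos θ).ne'
    field_simp
    rw [div_eq_iff hne]
    nlinarith [h0]
  have hcontg : Continuous fun θ => h θ * (deriv h θ + deriv (deriv (deriv h)) θ) :=
    hd.continuous.mul ((hd1.continuous).add hcont3)
  have hint : ∫ θ in (0:ℝ)..(2 * π),
      (h θ * (deriv h θ + deriv (deriv (deriv h)) θ)) = F (2 * π) - F 0 :=
    intervalIntegral.integral_eq_sub_of_hasDerivAt (fun x _ => hFd x)
      (hcontg.intervalIntegrable _ _)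
  have pd : ∀ f : ℝ → ℝ, Function.Periodic f (2 * π) →
      Function.Periodic (deriv f) (2 * π) := by
    intro f hf x
    have hfe : (fun y => f (y + 2 * π)) = f := funext hf
    calc deriv f (x + 2 * π) = deriv (fun y => f (y + 2 * π)) x := by
          rw [deriv_comp_add_const]
      _ = deriv f x := by rw [hfe]
  have hFper : F (2 * π) = F 0 := by
    have p0 : h (2 * π) = h 0 := by simpa using hper 0
    have p1 : deriv h (2 * π) = deriv h 0 := by simpa using pd h hper 0
    have p2 : deriv (deriv h) (2 * π) = deriv (deriv h) 0 := by
      simpa using pd _ (pd h hper) 0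
    simp [hF, p0, p1, p2]
  calc J * ∫ θ in (0:ℝ)..(2 * π), ((h θ) ^ 2)⁻¹
      = ∫ θ in (0:ℝ)..(2 * π), J * ((h θ) ^ 2)⁻¹ := by
        rw [intervalIntegral.integral_const_mul]
    _ = ∫ θ in (0:ℝ)..(2 * π),
          (1 / 2 + h θ * (deriv h θ + deriv (deriv (deriv h)) θ)) := by
        refine intervalIntegral.integral_congr fun θ _ => key θ
    _ = (∫ θ in (0:ℝ)..(2 * π), (1/2 : ℝ)) +
          ∫ θ in (0:ℝ)..(2 * π), (h θ * (deriv h θ + deriv (deriv (deriv h)) θ)) := by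
        rw [intervalIntegral.integral_add (intervalIntegrable_const)
          (hcontg.intervalIntegrable _ _)]
    _ = π := by
        rw [hint, hFper]
        simp
        ring
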